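/- Let G = (V,E) be a finite simple graph and let P(G) be the number of acyclic orientations of G. If e ∈ E, then P(G) = P(G∖e) + P(G/e), where G∖e deletes e and G/e contracts e (removing any resulting loops and parallel edges). -/

import Mathlib

open SimpleGraph Polynomial

/-- `r` is an orientation of the simple graph `G`: every directed edge lies over an
edge of `G`, and every edge of `G` gets exactly one of its two directions. -/
def IsOrientation {V : Type*} (G : SimpleGraph V) (r : V → V → Prop) : Prop :=
  (∀ u v, r u v → G.Adj u v) ∧ (∀ u v, G.Adj u v → (r u v ↔ ¬ r v u))

/-- A directed relation is acyclic if it has no directed cycles. -/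
def IsAcyclicRel {V : Type*} (r : V → V → Prop) : Prop :=
  ∀ v, ¬ Relation.TransGen r v v

/-- The number of acyclic orientations of `G`. -/
noncomputable def acyclicOrientationCount {V : Type*} (G : SimpleGraph V) : ℕ :=
  Nat.card {r : V → V → Prop // IsOrientation G r ∧ IsAcyclicRel r}

/-- The simple graph obtained from `G` by contracting the edge `{u,w}`
(identifying `w` with `u`, removing loops and parallel edges). -/
def contractEdge {V : Type*} (G : SimpleGraph V) (u w : V) :
    SimpleGraph {x : V // x ≠ w} where
  Adj a b := a ≠ b ∧ (G.Adj a b ∨ (a.1 = u ∧ G.Adj w b.1) ∨ (b.1 = u ∧ G.Adj a.1 w))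
  symm := by
    constructor
    rintro a b ⟨hab, h | ⟨ha, h⟩ | ⟨hb, h⟩⟩
    · exact ⟨hab.symm, Or.inl h.symm⟩
    · exact ⟨hab.symm, Or.inr (Or.inr ⟨ha, h.symm⟩)⟩
    · exact ⟨hab.symm, Or.inr (Or.inl ⟨hb, h.symm⟩)⟩
  loopless := by constructor; rintro a ⟨h, -⟩; exact h rfl

namespace DCAux

open Relation

variable {V : Type*}

def isE (u w a b : V) : Prop := (a = u ∧ b = w) ∨ (a = w ∧ b = u)

def delRel (u w : V) (r : V → V → Prop) : V → V → Prop :=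
  fun a b => r a b ∧ ¬ isE u w a b

def extRel (u w : V) (σ : V → V → Prop) : V → V → Prop :=
  fun a b => σ a b ∨ (a = u ∧ b = w)

lemma transGen_extRel {σ : V → V → Prop} {u w a b : V}
    (h : TransGen (extRel u w σ) a b) :
    TransGen σ a b ∨ (ReflTransGen σ a u ∧ ReflTransGen σ w b) := by
  induction h with
  | single h =>
    rcases h with h | ⟨rfl, rfl⟩
    · exact Or.inl (.single h)
    · exact Or.inr ⟨.refl, .refl⟩
  | tail hab hbc ih =>
    rcases ih with ih | ⟨ih1, ih2⟩
    · rcases hbc with hbc | ⟨rfl, rfl⟩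
      · exact Or.inl (ih.tail hbc)
      · exact Or.inr ⟨ih.to_reflTransGen, .refl⟩
    · rcases hbc with hbc | ⟨rfl, rfl⟩
      · exact Or.inr ⟨ih1, ih2.tail hbc⟩
      · exact Or.inr ⟨ih1, .refl⟩

lemma isAcyclicRel_extRel {σ : V → V → Prop} {u w : V} (hne : u ≠ w)
    (hac : IsAcyclicRel σ) (h : ¬ TransGen σ w u) :
    IsAcyclicRel (extRel u w σ) := by
  intro v hv
  rcases transGen_extRel hv with h1 | ⟨h1, h2⟩
  · exact hac v h1
  · rcases Relation.reflTransGen_iff_eq_or_transGen.mp (h2.trans h1) with h3 | h3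
    · exact hne h3
    · exact h h3

variable {G : SimpleGraph V} {u w : V}

lemma gd_adj {a b : V} :
    (G.deleteEdges {s(u, w)}).Adj a b ↔ G.Adj a b ∧ ¬ isE u w a b := by
  rw [SimpleGraph.deleteEdges_adj]
  simp [Set.mem_singleton_iff, Sym2.eq_iff, isE]

lemma not_sigma_uw {σ : V → V → Prop}
    (hor : IsOrientation (G.deleteEdges {s(u, w)}) σ) : ¬ σ u w :=
  fun h => (gd_adj.mp (hor.1 _ _ h)).2 (Or.inl ⟨rfl, rfl⟩)

lemma not_sigma_wu {σ : V → V → Prop}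
    (hor : IsOrientation (G.deleteEdges {s(u, w)}) σ) : ¬ σ w u :=
  fun h => (gd_adj.mp (hor.1 _ _ h)).2 (Or.inr ⟨rfl, rfl⟩)

lemma isOrientation_delRel {r : V → V → Prop} (hor : IsOrientation G r) :
    IsOrientation (G.deleteEdges {s(u, w)}) (delRel u w r) := by
  constructor
  · rintro a b ⟨h1, h2⟩; exact gd_adj.mpr ⟨hor.1 a b h1, h2⟩
  · intro a b hab
    rw [gd_adj] at hab
    have h := hor.2 a b hab.1
    have h2 : ¬ isE u w b a := by
      rintro (⟨rfl, rfl⟩ | ⟨rfl, rfl⟩) <;> exact hab.2 (by simp [isE])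
    simp only [delRel]
    constructor
    · rintro ⟨hr, -⟩ ⟨hr', -⟩; exact (h.mp hr) hr'
    · intro hn
      refine ⟨h.mpr (fun hr' => hn ⟨hr', h2⟩), hab.2⟩

lemma isOrientation_extRel {σ : V → V → Prop} (he : G.Adj u w)
    (hor : IsOrientation (G.deleteEdges {s(u, w)}) σ) :
    IsOrientation G (extRel u w σ) := by
  constructor
  · rintro a b (h | ⟨rfl, rfl⟩)
    · exact (gd_adj.mp (hor.1 a b h)).1
    · exact he
  · intro a b hab
    by_cases hE : isE u w a b
    · rcases hE with ⟨rfl, rfl⟩ | ⟨rfl, rfl⟩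
      · simp only [extRel]
        constructor
        · rintro - (h | ⟨h1, -⟩)
          · exact not_sigma_wu hor h
          · exact he.ne h1.symm
        · intro _; exact Or.inr ⟨by trivial, by trivial⟩
      · simp only [extRel]
        constructor
        · rintro (h | ⟨h1, -⟩)
          · exact absurd h (not_sigma_wu hor)
          · exact absurd h1 he.ne'
        · intro hn; exact absurd (Or.inr ⟨by trivial, by trivial⟩) hn
    · have hGd : (G.deleteEdges {s(u, w)}).Adj a b := gd_adj.mpr ⟨hab, hE⟩
      have h := hor.2 a b hGd
      have h3 : ¬ (a = u ∧ b = w) := fun hc => hE (Or.inl hc)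
      have h4 : ¬ (b = u ∧ a = w) := fun hc => hE (Or.inr ⟨hc.2, hc.1⟩)
      simp only [extRel]
      constructor
      · rintro (hr | hc) (hr' | hc')
        · exact (h.mp hr) hr'
        · exact h4 hc'
        · exact h3 hc
        · exact h3 hc
      · intro hn
        exact Or.inl (h.mpr (fun hr' => hn (Or.inl hr')))

lemma isAcyclicRel_delRel {r : V → V → Prop} (hac : IsAcyclicRel r) :
    IsAcyclicRel (delRel u w r) :=
  fun v hv => hac v (TransGen.mono (fun _ _ h => h.1) _ _ hv)

lemma not_transGen_delRel {r : V → V → Prop} (hac : IsAcyclicRel r) (h : r u w) :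
    ¬ TransGen (delRel u w r) w u :=
  fun hv => hac u ((TransGen.single h).trans (TransGen.mono (fun _ _ hh => hh.1) _ _ hv))

lemma delRel_extRel {σ : V → V → Prop}
    (hor : IsOrientation (G.deleteEdges {s(u, w)}) σ) :
    delRel u w (extRel u w σ) = σ := by
  funext a b
  simp only [delRel, extRel, eq_iff_iff]
  constructor
  · rintro ⟨h | hE, h2⟩
    · exact h
    · exact absurd (Or.inl hE) h2
  · intro h
    refine ⟨Or.inl h, ?_⟩
    rintro (⟨rfl, rfl⟩ | ⟨rfl, rfl⟩)
    · exact not_sigma_uw hor h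
    · exact not_sigma_wu hor h

lemma extRel_delRel {r : V → V → Prop} (hor : IsOrientation G r) (h : r u w) :
    extRel u w (delRel u w r) = r := by
  funext a b
  simp only [delRel, extRel, eq_iff_iff]
  constructor
  · rintro (⟨h1, -⟩ | ⟨rfl, rfl⟩)
    · exact h1
    · exact h
  · intro h1
    by_cases hE : isE u w a b
    · rcases hE with ⟨rfl, rfl⟩ | ⟨rfl, rfl⟩
      · exact Or.inr ⟨rfl, rfl⟩
      · exact absurd h ((hor.2 _ _ (hor.1 _ _ h1)).mp h1)
    · exact Or.inl ⟨h1, hE⟩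

noncomputable def extEquiv (G : SimpleGraph V) (u w : V) (he : G.Adj u w) :
    {p : {r : V → V → Prop // IsOrientation G r ∧ IsAcyclicRel r} // p.1 u w} ≃
    {p : {r : V → V → Prop //
        IsOrientation (G.deleteEdges {s(u, w)}) r ∧ IsAcyclicRel r} //
      ¬ Relation.TransGen p.1 w u} where
  toFun p := ⟨⟨delRel u w p.1.1, isOrientation_delRel p.1.2.1,
      isAcyclicRel_delRel p.1.2.2⟩, not_transGen_delRel p.1.2.2 p.2⟩
  invFun p := ⟨⟨extRel u w p.1.1, isOrientation_extRel he p.1.2.1,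
      isAcyclicRel_extRel he.ne p.1.2.2 p.2⟩, Or.inr ⟨rfl, rfl⟩⟩
  left_inv p := Subtype.ext (Subtype.ext (extRel_delRel p.1.2.1 p.2))
  right_inv p := Subtype.ext (Subtype.ext (delRel_extRel p.1.2.1))

section Contract

variable {σ : V → V → Prop}

open Classical in
noncomputable def mMap (u w x : V) : V := if x = w then u else x

lemma mMap_of_ne {u w x : V} (h : x ≠ w) : mMap u w x = x := by
  unfold mMap; split <;> [exact absurd ‹x = w› h; rfl]

lemma mMap_w {u w : V} : mMap u w w = u := by
  unfold mMap; split <;> [rfl; exact absurd rfl ‹¬ w = w›]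

def QRel (u w : V) (σ : V → V → Prop) (x y : V) : Prop :=
  ∃ a b, σ a b ∧ mMap u w a = x ∧ mMap u w b = y

lemma mMap_eq_cases (hne : u ≠ w) {x y : V} (h : mMap u w x = mMap u w y) :
    x = y ∨ (x = w ∧ y = u) ∨ (x = u ∧ y = w) := by
  unfold mMap at h
  split_ifs at h with h1 h2 h2
  · exact Or.inl (h1.trans h2.symm)
  · exact Or.inr (Or.inl ⟨h1, h.symm⟩)
  · exact Or.inr (Or.inr ⟨h, h2⟩)
  · exact Or.inl h

lemma q_path {u w : V} (hne : u ≠ w) (hac : IsAcyclicRel σ)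
    (h1 : ¬ TransGen σ u w) (h2 : ¬ TransGen σ w u) {x y : V}
    (h : TransGen (QRel u w σ) x y) :
    (∃ a b, mMap u w a = x ∧ mMap u w b = y ∧ TransGen σ a b) ∨
    (∃ a b, mMap u w a = x ∧ mMap u w b = y ∧
      ((TransGen σ a w ∧ ReflTransGen σ u b) ∨
       (TransGen σ a u ∧ ReflTransGen σ w b))) := by
  induction h using Relation.TransGen.head_induction_on with
  | single hq =>
    obtain ⟨a, b, hs, ha, hb⟩ := hq
    exact Or.inl ⟨a, b, ha, hb, .single hs⟩
  | head hq htg IH =>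
    obtain ⟨a, b, hs, ha, hb⟩ := hq
    rcases IH with ⟨z', y', hz', hy', hp⟩ | ⟨z', y', hz', hy', hp⟩
    · rcases mMap_eq_cases hne (hb.trans hz'.symm) with rfl | ⟨rfl, rfl⟩ | ⟨rfl, rfl⟩
      · exact Or.inl ⟨a, y', ha, hy', hp.head hs⟩
      · exact Or.inr ⟨a, y', ha, hy', Or.inl ⟨.single hs, hp.to_reflTransGen⟩⟩
      · exact Or.inr ⟨a, y', ha, hy', Or.inr ⟨.single hs, hp.to_reflTransGen⟩⟩
    · rcases mMap_eq_cases hne (hb.trans hz'.symm) with rfl | ⟨rfl, rfl⟩ | ⟨rfl, rfl⟩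
      · rcases hp with ⟨hp1, hp2⟩ | ⟨hp1, hp2⟩
        · exact Or.inr ⟨a, y', ha, hy', Or.inl ⟨hp1.head hs, hp2⟩⟩
        · exact Or.inr ⟨a, y', ha, hy', Or.inr ⟨hp1.head hs, hp2⟩⟩
      · rcases hp with ⟨hp1, hp2⟩ | ⟨hp1, hp2⟩
        · exact absurd hp1 h1
        · exact absurd hp1 (hac _)
      · rcases hp with ⟨hp1, hp2⟩ | ⟨hp1, hp2⟩
        · exact absurd hp1 (hac _)
        · exact absurd hp1 h2

lemma isAcyclicRel_QRel {u w : V} (hne : u ≠ w) (hac : IsAcyclicRel σ)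
    (h1 : ¬ TransGen σ u w) (h2 : ¬ TransGen σ w u) :
    IsAcyclicRel (QRel u w σ) := by
  intro v hv
  rcases q_path hne hac h1 h2 hv with ⟨a, b, ha, hb, hp⟩ | ⟨a, b, ha, hb, hp⟩
  · rcases mMap_eq_cases hne (ha.trans hb.symm) with rfl | ⟨rfl, rfl⟩ | ⟨rfl, rfl⟩
    · exact hac a hp
    · exact h2 hp
    · exact h1 hp
  · rcases mMap_eq_cases hne (ha.trans hb.symm) with rfl | ⟨rfl, rfl⟩ | ⟨rfl, rfl⟩
    · rcases hp with ⟨hp1, hp2⟩ | ⟨hp1, hp2⟩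
      · exact h1 (TransGen.trans_right hp2 hp1)
      · exact h2 (TransGen.trans_right hp2 hp1)
    · rcases hp with ⟨hp1, hp2⟩ | ⟨hp1, hp2⟩
      · exact hac _ hp1
      · exact h2 hp1
    · rcases hp with ⟨hp1, hp2⟩ | ⟨hp1, hp2⟩
      · exact h1 hp1
      · exact hac _ hp1

def conRel (u w : V) (σ : V → V → Prop) :
    {x : V // x ≠ w} → {x : V // x ≠ w} → Prop :=
  fun a b => σ a.1 b.1 ∨ (a.1 = u ∧ σ w b.1) ∨ (b.1 = u ∧ σ a.1 w)

lemma conRel_to_QRel {u w : V} {a b : {x : V // x ≠ w}}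
    (h : conRel u w σ a b) : QRel u w σ a.1 b.1 := by
  rcases h with h | ⟨ha, h⟩ | ⟨hb, h⟩
  · exact ⟨a.1, b.1, h, mMap_of_ne a.2, mMap_of_ne b.2⟩
  · exact ⟨w, b.1, h, mMap_w.trans ha.symm, mMap_of_ne b.2⟩
  · exact ⟨a.1, w, h, mMap_of_ne a.2, mMap_w.trans hb.symm⟩

lemma isAcyclicRel_conRel {u w : V} (hne : u ≠ w) (hac : IsAcyclicRel σ)
    (h1 : ¬ TransGen σ u w) (h2 : ¬ TransGen σ w u) :
    IsAcyclicRel (conRel u w σ) := by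
  intro v hv
  exact isAcyclicRel_QRel hne hac h1 h2 v.1
    (hv.lift Subtype.val (fun _ _ h => conRel_to_QRel h))

lemma contractEdge_adj {a b : {x : V // x ≠ w}} :
    (contractEdge G u w).Adj a b ↔
      a ≠ b ∧ (G.Adj a.1 b.1 ∨ (a.1 = u ∧ G.Adj w b.1) ∨ (b.1 = u ∧ G.Adj a.1 w)) :=
  Iff.rfl

lemma isOrientation_conRel (he : G.Adj u w)
    (hor : IsOrientation (G.deleteEdges {s(u, w)}) σ) (hac : IsAcyclicRel σ)
    (h1 : ¬ TransGen σ u w) (h2 : ¬ TransGen σ w u) :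
    IsOrientation (contractEdge G u w) (conRel u w σ) := by
  have hQac := isAcyclicRel_QRel he.ne hac h1 h2
  have notboth : ∀ a b, conRel u w σ a b → conRel u w σ b a → False := by
    intro a b hab hba
    exact hQac a.1 ((TransGen.single (conRel_to_QRel hab)).tail (conRel_to_QRel hba))
  constructor
  · rintro a b (h | ⟨ha, h⟩ | ⟨hb, h⟩)
    · have hG := (gd_adj.mp (hor.1 _ _ h)).1
      exact ⟨fun hEq => hG.ne (congrArg Subtype.val hEq), Or.inl hG⟩
    · have hG := (gd_adj.mp (hor.1 _ _ h)).1
      refine ⟨fun hEq => ?_, Or.inr (Or.inl ⟨ha, hG⟩)⟩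
      have hbu : b.1 = u := by rw [← hEq]; exact ha
      exact h2 (TransGen.single (hbu ▸ h))
    · have hG := (gd_adj.mp (hor.1 _ _ h)).1
      refine ⟨fun hEq => ?_, Or.inr (Or.inr ⟨hb, hG⟩)⟩
      have hau : a.1 = u := by rw [hEq]; exact hb
      exact h1 (TransGen.single (hau ▸ h))
  · intro a b hab
    obtain ⟨hne', hadj⟩ := contractEdge_adj.mp hab
    have hone : conRel u w σ a b ∨ conRel u w σ b a := by
      rcases hadj with h | ⟨ha, h⟩ | ⟨hb, h⟩
      · have hGd : (G.deleteEdges {s(u, w)}).Adj a.1 b.1 := gd_adj.mpr ⟨h, by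
          rintro (⟨h3, h4⟩ | ⟨h3, h4⟩); exacts [b.2 h4, a.2 h3]⟩
        by_cases hs : σ a.1 b.1
        · exact Or.inl (Or.inl hs)
        · exact Or.inr (Or.inl (not_not.mp fun hn => hs ((hor.2 _ _ hGd).mpr hn)))
      · have hbu : b.1 ≠ u := fun hbu => hne' (Subtype.ext (ha.trans hbu.symm))
        have hGd : (G.deleteEdges {s(u, w)}).Adj w b.1 := gd_adj.mpr ⟨h, by
          rintro (⟨h3, -⟩ | ⟨-, h4⟩); exacts [he.ne' h3, hbu h4]⟩
        by_cases hs : σ w b.1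
        · exact Or.inl (Or.inr (Or.inl ⟨ha, hs⟩))
        · exact Or.inr (Or.inr (Or.inr ⟨ha,
            not_not.mp fun hn => hs ((hor.2 _ _ hGd).mpr hn)⟩))
      · have hau : a.1 ≠ u := fun hau => hne' (Subtype.ext (hau.trans hb.symm))
        have hGd : (G.deleteEdges {s(u, w)}).Adj a.1 w := gd_adj.mpr ⟨h, by
          rintro (⟨h3, -⟩ | ⟨h3, -⟩); exacts [hau h3, a.2 h3]⟩
        by_cases hs : σ a.1 w
        · exact Or.inl (Or.inr (Or.inr ⟨hb, hs⟩))
        · exact Or.inr (Or.inr (Or.inl ⟨hb,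
            not_not.mp fun hn => hs ((hor.2 _ _ hGd).mpr hn)⟩))
    constructor
    · intro hcd hdc
      exact notboth _ _ hcd hdc
    · intro hn
      rcases hone with h | h
      exacts [h, absurd h hn]

open Classical in
noncomputable def liftV {u w : V} (hne : u ≠ w) (x : V) : {x : V // x ≠ w} :=
  if h : x = w then ⟨u, hne⟩ else ⟨x, h⟩

lemma liftV_of_ne {u w x : V} (hne : u ≠ w) (h : x ≠ w) : liftV hne x = ⟨x, h⟩ := by
  unfold liftV
  split
  · exact absurd ‹x = w› h
  · rfl

lemma liftV_w {u w : V} (hne : u ≠ w) : liftV hne w = ⟨u, hne⟩ := by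
  unfold liftV
  split
  · rfl
  · exact absurd rfl ‹¬ w = w›

lemma liftV_coe {u w : V} (hne : u ≠ w) (a : {x : V // x ≠ w}) :
    liftV hne a.1 = a := by
  rw [liftV_of_ne hne a.2]

def backRel (G : SimpleGraph V) (u w : V) (hne : u ≠ w)
    (τ : {x : V // x ≠ w} → {x : V // x ≠ w} → Prop) : V → V → Prop :=
  fun a b => (G.deleteEdges {s(u, w)}).Adj a b ∧ τ (liftV hne a) (liftV hne b)

lemma contractEdge_adj_liftV (hne : u ≠ w) {a b : V}
    (h : (G.deleteEdges {s(u, w)}).Adj a b) :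
    (contractEdge G u w).Adj (liftV hne a) (liftV hne b) := by
  obtain ⟨hG, hE⟩ := gd_adj.mp h
  by_cases haw : a = w
  · subst haw
    have hbw : b ≠ a := fun hb => G.loopless.irrefl a (by rw [hb] at hG; exact hG)
    rw [liftV_w, liftV_of_ne hne hbw]
    refine ⟨fun hEq => hE (Or.inr ⟨rfl, (congrArg Subtype.val hEq).symm⟩),
      Or.inr (Or.inl ⟨rfl, hG⟩)⟩
  · by_cases hbw : b = w
    · subst hbw
      rw [liftV_of_ne hne haw, liftV_w]
      exact ⟨fun hEq => hE (Or.inl ⟨congrArg Subtype.val hEq, rfl⟩),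
        Or.inr (Or.inr ⟨rfl, hG⟩)⟩
    · rw [liftV_of_ne hne haw, liftV_of_ne hne hbw]
      exact ⟨fun hEq => hG.ne (congrArg Subtype.val hEq), Or.inl hG⟩

lemma isOrientation_backRel (hne : u ≠ w)
    {τ : {x : V // x ≠ w} → {x : V // x ≠ w} → Prop}
    (horτ : IsOrientation (contractEdge G u w) τ) :
    IsOrientation (G.deleteEdges {s(u, w)}) (backRel G u w hne τ) := by
  constructor
  · exact fun a b h => h.1
  · intro a b hab
    have hc := horτ.2 _ _ (contractEdge_adj_liftV hne hab)
    simp only [backRel]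
    constructor
    · rintro ⟨-, h⟩ ⟨-, h'⟩
      exact (hc.mp h) h'
    · intro hn
      exact ⟨hab, hc.mpr fun h' => hn ⟨hab.symm, h'⟩⟩

lemma isAcyclicRel_backRel (hne : u ≠ w)
    {τ : {x : V // x ≠ w} → {x : V // x ≠ w} → Prop} (hacτ : IsAcyclicRel τ) :
    IsAcyclicRel (backRel G u w hne τ) := fun v hv =>
  hacτ (liftV hne v) (hv.lift (liftV hne) (fun _ _ h => h.2))

lemma not_transGen_backRel_uw (hne : u ≠ w)
    {τ : {x : V // x ≠ w} → {x : V // x ≠ w} → Prop} (hacτ : IsAcyclicRel τ) :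
    ¬ TransGen (backRel G u w hne τ) u w := by
  intro hv
  have h := hv.lift (liftV hne) (fun _ _ h => h.2)
  rw [Function.onFun, liftV_w, liftV_of_ne hne hne] at h
  exact hacτ _ h

lemma not_transGen_backRel_wu (hne : u ≠ w)
    {τ : {x : V // x ≠ w} → {x : V // x ≠ w} → Prop} (hacτ : IsAcyclicRel τ) :
    ¬ TransGen (backRel G u w hne τ) w u := by
  intro hv
  have h := hv.lift (liftV hne) (fun _ _ h => h.2)
  rw [Function.onFun, liftV_w, liftV_of_ne hne hne] at h
  exact hacτ _ h

lemma backRel_conRel (hne : u ≠ w)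
    (hor : IsOrientation (G.deleteEdges {s(u, w)}) σ)
    (h1 : ¬ TransGen σ u w) (h2 : ¬ TransGen σ w u) :
    backRel G u w hne (conRel u w σ) = σ := by
  funext a b
  simp only [backRel, eq_iff_iff]
  constructor
  · rintro ⟨hGd, hτ⟩
    obtain ⟨hG, hE⟩ := gd_adj.mp hGd
    by_cases haw : a = w
    · subst haw
      have hbw : b ≠ a := fun hb => G.loopless.irrefl a (by rw [hb] at hG; exact hG)
      rw [liftV_w, liftV_of_ne hne hbw] at hτ
      have hbu : b ≠ u := fun hb => hE (Or.inr ⟨rfl, hb⟩)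
      rcases hτ with h | ⟨-, h⟩ | ⟨h3, -⟩
      · by_cases hs : σ a b
        · exact hs
        · have hh : σ b a := not_not.mp fun hn => hs ((hor.2 _ _ hGd).mpr hn)
          exact absurd ((TransGen.single h).tail hh) h1
      · exact h
      · exact absurd h3 hbu
    · by_cases hbw : b = w
      · subst hbw
        rw [liftV_of_ne hne haw, liftV_w] at hτ
        have hau : a ≠ u := fun ha => hE (Or.inl ⟨ha, rfl⟩)
        rcases hτ with h | ⟨h3, -⟩ | ⟨-, h⟩
        · by_cases hs : σ a b
          · exact hs
          · have hh : σ b a := not_not.mp fun hn => hs ((hor.2 _ _ hGd).mpr hn)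
            exact absurd ((TransGen.single hh).tail h) h2
        · exact absurd h3 hau
        · exact h
      · rw [liftV_of_ne hne haw, liftV_of_ne hne hbw] at hτ
        rcases hτ with h | ⟨ha, h⟩ | ⟨hb, h⟩
        · exact h
        · subst ha
          by_cases hs : σ a b
          · exact hs
          · have hh : σ b a := not_not.mp fun hn => hs ((hor.2 _ _ hGd).mpr hn)
            exact absurd ((TransGen.single h).tail hh) h2
        · subst hb
          by_cases hs : σ a b
          · exact hs
          · have hh : σ b a := not_not.mp fun hn => hs ((hor.2 _ _ hGd).mpr hn)
            exact absurd ((TransGen.single hh).tail h) h1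
  · intro hσ
    have hGd := hor.1 _ _ hσ
    refine ⟨hGd, ?_⟩
    obtain ⟨hG, hE⟩ := gd_adj.mp hGd
    by_cases haw : a = w
    · subst haw
      have hbw : b ≠ a := fun hb => G.loopless.irrefl a (by rw [hb] at hG; exact hG)
      rw [liftV_w, liftV_of_ne hne hbw]
      exact Or.inr (Or.inl ⟨rfl, hσ⟩)
    · by_cases hbw : b = w
      · subst hbw
        rw [liftV_of_ne hne haw, liftV_w]
        exact Or.inr (Or.inr ⟨rfl, hσ⟩)
      · rw [liftV_of_ne hne haw, liftV_of_ne hne hbw]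
        exact Or.inl hσ

lemma conRel_backRel (hne : u ≠ w)
    {τ : {x : V // x ≠ w} → {x : V // x ≠ w} → Prop}
    (horτ : IsOrientation (contractEdge G u w) τ) :
    conRel u w (backRel G u w hne τ) = τ := by
  funext c d
  simp only [conRel, backRel, eq_iff_iff]
  constructor
  · rintro (⟨hGd, h⟩ | ⟨hc, hGd, h⟩ | ⟨hd, hGd, h⟩)
    · rwa [liftV_coe hne c, liftV_coe hne d] at h
    · rw [liftV_w, liftV_coe] at h
      have hcu : c = ⟨u, hne⟩ := Subtype.ext hc
      rwa [← hcu] at h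
    · rw [liftV_coe, liftV_w] at h
      have hdu : d = ⟨u, hne⟩ := Subtype.ext hd
      rwa [← hdu] at h
  · intro hτ
    obtain ⟨hcd, hadj⟩ := contractEdge_adj.mp (horτ.1 _ _ hτ)
    rcases hadj with h | ⟨hc, h⟩ | ⟨hd, h⟩
    · refine Or.inl ⟨gd_adj.mpr ⟨h, ?_⟩, ?_⟩
      · rintro (⟨h3, h4⟩ | ⟨h3, h4⟩); exacts [d.2 h4, c.2 h3]
      · rw [liftV_coe, liftV_coe]; exact hτ
    · refine Or.inr (Or.inl ⟨hc, gd_adj.mpr ⟨h, ?_⟩, ?_⟩)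
      · rintro (⟨h3, -⟩ | ⟨-, h4⟩)
        · exact hne h3.symm
        · exact hcd (Subtype.ext (hc.trans h4.symm))
      · rw [liftV_w, liftV_coe]
        have hcu : c = ⟨u, hne⟩ := Subtype.ext hc
        rwa [hcu] at hτ
    · refine Or.inr (Or.inr ⟨hd, gd_adj.mpr ⟨h, ?_⟩, ?_⟩)
      · rintro (⟨h3, -⟩ | ⟨h3, -⟩)
        · exact hcd (Subtype.ext (h3.trans hd.symm))
        · exact c.2 h3
      · rw [liftV_coe, liftV_w]
        have hdu : d = ⟨u, hne⟩ := Subtype.ext hd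
        rwa [hdu] at hτ

noncomputable def contractEquiv (G : SimpleGraph V) (u w : V) (he : G.Adj u w) :
    {p : {r : V → V → Prop //
        IsOrientation (G.deleteEdges {s(u, w)}) r ∧ IsAcyclicRel r} //
      ¬ Relation.TransGen p.1 u w ∧ ¬ Relation.TransGen p.1 w u} ≃
    {r : ({x : V // x ≠ w} → {x : V // x ≠ w} → Prop) //
      IsOrientation (contractEdge G u w) r ∧ IsAcyclicRel r} where
  toFun p := ⟨conRel u w p.1.1,
    isOrientation_conRel he p.1.2.1 p.1.2.2 p.2.1 p.2.2,
    isAcyclicRel_conRel he.ne p.1.2.2 p.2.1 p.2.2⟩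
  invFun r := ⟨⟨backRel G u w he.ne r.1, isOrientation_backRel he.ne r.2.1,
      isAcyclicRel_backRel he.ne r.2.2⟩,
    not_transGen_backRel_uw he.ne r.2.2, not_transGen_backRel_wu he.ne r.2.2⟩
  left_inv p := Subtype.ext (Subtype.ext (backRel_conRel he.ne p.1.2.1 p.2.1 p.2.2))
  right_inv r := Subtype.ext (conRel_backRel he.ne r.2.1)


end Contract

end DCAux

/-- Deletion–contraction recursion for the number of acyclic orientations. -/
theorem acyclicOrientationCount_deletion_contraction {V : Type*} [Fintype V]
    (G : SimpleGraph V) (u w : V) (he : G.Adj u w) :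
    acyclicOrientationCount G =
      acyclicOrientationCount (G.deleteEdges {s(u, w)}) +
        acyclicOrientationCount (contractEdge G u w) := by
  classical
  have hT : Nat.card {r : V → V → Prop // IsOrientation G r ∧ IsAcyclicRel r} =
      Nat.card {p : {r : V → V → Prop // IsOrientation G r ∧ IsAcyclicRel r} // p.1 u w} +
      Nat.card {p : {r : V → V → Prop // IsOrientation G r ∧ IsAcyclicRel r} // ¬ p.1 u w} := by
    rw [← Nat.card_sum]
    exact (Nat.card_congr (Equiv.sumCompl _)).symm
  have h1 : Nat.card {p : {r : V → V → Prop // IsOrientation G r ∧ IsAcyclicRel r} // p.1 u w} =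
      Nat.card {p : {r : V → V → Prop //
          IsOrientation (G.deleteEdges {s(u, w)}) r ∧ IsAcyclicRel r} //
        ¬ Relation.TransGen p.1 w u} :=
    Nat.card_congr (DCAux.extEquiv G u w he)
  have h2 : Nat.card {p : {r : V → V → Prop // IsOrientation G r ∧ IsAcyclicRel r} // ¬ p.1 u w} =
      Nat.card {p : {r : V → V → Prop //
          IsOrientation (G.deleteEdges {s(u, w)}) r ∧ IsAcyclicRel r} //
        ¬ Relation.TransGen p.1 u w} := by
    have e1 : {p : {r : V → V → Prop // IsOrientation G r ∧ IsAcyclicRel r} // ¬ p.1 u w} ≃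
        {p : {r : V → V → Prop // IsOrientation G r ∧ IsAcyclicRel r} // p.1 w u} :=
      Equiv.subtypeEquivRight (fun p => (iff_not_comm.mp (p.2.1.2 u w he)).symm)
    have e2 := DCAux.extEquiv G w u he.symm
    rw [show (s(w, u) : Sym2 V) = s(u, w) from Sym2.eq_swap] at e2
    exact Nat.card_congr (e1.trans e2)
  have hD : Nat.card {r : V → V → Prop //
        IsOrientation (G.deleteEdges {s(u, w)}) r ∧ IsAcyclicRel r} =
      Nat.card {p : {r : V → V → Prop //
          IsOrientation (G.deleteEdges {s(u, w)}) r ∧ IsAcyclicRel r} //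
        Relation.TransGen p.1 w u} +
      Nat.card {p : {r : V → V → Prop //
          IsOrientation (G.deleteEdges {s(u, w)}) r ∧ IsAcyclicRel r} //
        ¬ Relation.TransGen p.1 w u} := by
    rw [← Nat.card_sum]
    exact (Nat.card_congr (Equiv.sumCompl _)).symm
  have h3 : Nat.card {p : {r : V → V → Prop //
          IsOrientation (G.deleteEdges {s(u, w)}) r ∧ IsAcyclicRel r} //
        ¬ Relation.TransGen p.1 u w} =
      Nat.card {p : {r : V → V → Prop //
          IsOrientation (G.deleteEdges {s(u, w)}) r ∧ IsAcyclicRel r} //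
        Relation.TransGen p.1 w u} +
      Nat.card {p : {r : V → V → Prop //
          IsOrientation (G.deleteEdges {s(u, w)}) r ∧ IsAcyclicRel r} //
        ¬ Relation.TransGen p.1 u w ∧ ¬ Relation.TransGen p.1 w u} := by
    have e3 := Equiv.subtypeSubtypeEquivSubtypeInter
      (fun p : {r : V → V → Prop //
          IsOrientation (G.deleteEdges {s(u, w)}) r ∧ IsAcyclicRel r} =>
        ¬ Relation.TransGen p.1 u w)
      (fun p => Relation.TransGen p.1 w u)
    have e4 := Equiv.subtypeSubtypeEquivSubtypeInter
      (fun p : {r : V → V → Prop //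
          IsOrientation (G.deleteEdges {s(u, w)}) r ∧ IsAcyclicRel r} =>
        ¬ Relation.TransGen p.1 u w)
      (fun p => ¬ Relation.TransGen p.1 w u)
    have e5 : {p : {r : V → V → Prop //
          IsOrientation (G.deleteEdges {s(u, w)}) r ∧ IsAcyclicRel r} //
        ¬ Relation.TransGen p.1 u w ∧ Relation.TransGen p.1 w u} ≃
        {p : {r : V → V → Prop //
          IsOrientation (G.deleteEdges {s(u, w)}) r ∧ IsAcyclicRel r} //
        Relation.TransGen p.1 w u} :=
      Equiv.subtypeEquivRight
        (fun p => ⟨And.right, fun h => ⟨fun h' => p.2.2 u (h'.trans h), h⟩⟩)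
    calc Nat.card {p : {r : V → V → Prop //
          IsOrientation (G.deleteEdges {s(u, w)}) r ∧ IsAcyclicRel r} //
        ¬ Relation.TransGen p.1 u w}
        = Nat.card ({q : {p : {r : V → V → Prop //
              IsOrientation (G.deleteEdges {s(u, w)}) r ∧ IsAcyclicRel r} //
            ¬ Relation.TransGen p.1 u w} // Relation.TransGen q.1.1 w u} ⊕
          {q : {p : {r : V → V → Prop //
              IsOrientation (G.deleteEdges {s(u, w)}) r ∧ IsAcyclicRel r} //
            ¬ Relation.TransGen p.1 u w} // ¬ Relation.TransGen q.1.1 w u}) :=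
          (Nat.card_congr (Equiv.sumCompl _)).symm
      _ = _ := by
          rw [Nat.card_sum, Nat.card_congr (e3.trans e5), Nat.card_congr e4]
  have h4 : Nat.card {p : {r : V → V → Prop //
          IsOrientation (G.deleteEdges {s(u, w)}) r ∧ IsAcyclicRel r} //
        ¬ Relation.TransGen p.1 u w ∧ ¬ Relation.TransGen p.1 w u} =
      Nat.card {r : ({x : V // x ≠ w} → {x : V // x ≠ w} → Prop) //
        IsOrientation (contractEdge G u w) r ∧ IsAcyclicRel r} :=
    Nat.card_congr (DCAux.contractEquiv G u w he)
  show Nat.card {r : V → V → Prop // IsOrientation G r ∧ IsAcyclicRel r} = _ + _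
  rw [hT, h1, h2, h3, h4]
  show _ = Nat.card {r : V → V → Prop //
      IsOrientation (G.deleteEdges {s(u, w)}) r ∧ IsAcyclicRel r} + _
  rw [hD]
  show _ = _ + Nat.card {r : ({x : V // x ≠ w} → {x : V // x ≠ w} → Prop) //
      IsOrientation (contractEdge G u w) r ∧ IsAcyclicRel r}
  omega
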